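/- If an antichain O in ω^{<ω} is transformed to Ō = {(n,i) : ∃σ ∈ O ∩ b_n, length(σ) = i}, where b_n is a branch containing ⟨n⟩, then Ō intersects each column {n}×ω of ω×ω in at most one point. Consequently 𝔞_s ≤ 𝔬̄. -/

import Mathlib

/-- A branch of the tree `ω^{<ω}`: a maximal chain in the initial-segment order. -/
def IsBranch (b : Set (List ℕ)) : Prop := IsMaxChain (· <+: ·) b

/-- `Ō = {(n,i) : ∃ σ ∈ O ∩ b_n with length σ = i}`. -/
def obar (O : Set (List ℕ)) (b : ℕ → Set (List ℕ)) : Set (ℕ × ℕ) :=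
  {p | ∃ σ ∈ O ∩ b p.1, σ.length = p.2}

/-- The `n`-th column `{n} × ω` of `ω × ω`. -/
def Column (n : ℕ) : Set (ℕ × ℕ) := {p | p.1 = n}

/-- Families witnessing `𝔞_s`: maximal almost disjoint families of subsets of `ω × ω`
each of which is infinite and meets every column at most once (so each member may be
viewed as an infinite partial function `ω ⇀ ω`, almost disjoint from every column). -/
def MadFnFam (𝒜 : Set (Set (ℕ × ℕ))) : Prop :=
  (∀ A ∈ 𝒜, A.Infinite ∧ ∀ n, (A ∩ Column n).Subsingleton) ∧
  𝒜.Pairwise (fun A B => (A ∩ B).Finite) ∧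
  ∀ B : Set (ℕ × ℕ), B.Infinite → (∀ n, (B ∩ Column n).Subsingleton) →
    ∃ A ∈ 𝒜, (B ∩ A).Infinite

/-- `𝔞_s`: the least cardinality of a maximal almost disjoint family of infinite
partial functions. -/
noncomputable def frakAs : Cardinal :=
  sInf {c | ∃ 𝒜 : Set (Set (ℕ × ℕ)), MadFnFam 𝒜 ∧ Cardinal.mk ↥𝒜 = c}

/-- Maximal almost disjoint families of infinite antichains of `ω^{<ω}`. -/
def MadAntichainFam (𝒪 : Set (Set (List ℕ))) : Prop :=
  (∀ A ∈ 𝒪, A.Infinite ∧ IsAntichain (· <+: ·) A) ∧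
  𝒪.Pairwise (fun A B => (A ∩ B).Finite) ∧
  ∀ B : Set (List ℕ), B.Infinite → IsAntichain (· <+: ·) B →
    ∃ A ∈ 𝒪, (B ∩ A).Infinite

/-- `𝔬̄`: the least cardinality of a maximal almost disjoint family of infinite
antichains of `ω^{<ω}`. -/
noncomputable def frakObar : Cardinal :=
  sInf {c | ∃ 𝒪 : Set (Set (List ℕ)), MadAntichainFam 𝒪 ∧ Cardinal.mk ↥𝒪 = c}

/-! ### Auxiliary material -/

/-- The coding map `(n,i) ↦ ⟨n,…,n⟩` (a list of `i+1` copies of `n`). -/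
def ecode (p : ℕ × ℕ) : List ℕ := List.replicate (p.2 + 1) p.1

lemma ecode_injective : Function.Injective ecode := by
  rintro ⟨n, i⟩ ⟨m, j⟩ h
  have hlen : i + 1 = j + 1 := by
    have := congrArg List.length h
    simpa [ecode] using this
  have hmem : n ∈ ecode (m, j) := by
    rw [← h]; simp [ecode, List.mem_replicate]
  have hn : n = m := by simpa [ecode, List.mem_replicate] using hmem
  simp_all

lemma ecode_prefix_fst {p q : ℕ × ℕ} (h : ecode p <+: ecode q) : p.1 = q.1 := by
  have hmem : p.1 ∈ List.replicate (q.2 + 1) q.1 :=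
    h.subset (List.mem_replicate.2 ⟨by omega, rfl⟩)
  exact (List.mem_replicate.1 hmem).2

lemma ecode_prefix_of_le {p q : ℕ × ℕ} (h1 : p.1 = q.1) (h : p.2 ≤ q.2) :
    ecode p <+: ecode q := by
  refine ⟨List.replicate (q.2 - p.2) p.1, ?_⟩
  rw [ecode, ecode, ← List.replicate_add, h1]
  congr 1
  omega

/-- If `O` is an antichain, its preimage under `ecode` meets each column at most once. -/
lemma preimage_col_subsingleton {O : Set (List ℕ)} (hO : IsAntichain (· <+: ·) O)
    (n : ℕ) : ((ecode ⁻¹' O) ∩ Column n).Subsingleton := by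
  intro p hp q hq
  have h1 : p.1 = n := hp.2
  have h2 : q.1 = n := hq.2
  have heq : p.1 = q.1 := by rw [h1, h2]
  have key : ecode p = ecode q := by
    by_contra hne
    rcases le_total p.2 q.2 with hij | hij
    · exact hO hp.1 hq.1 hne (ecode_prefix_of_le heq hij)
    · exact hO hq.1 hp.1 (Ne.symm hne) (ecode_prefix_of_le heq.symm hij)
  exact ecode_injective key

/-- If `B` meets each column at most once, its image under `ecode` is an antichain. -/
lemma image_antichain {B : Set (ℕ × ℕ)} (hB : ∀ n, (B ∩ Column n).Subsingleton) :
    IsAntichain (· <+: ·) (ecode '' B) := by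
  rintro x ⟨p, hp, rfl⟩ y ⟨q, hq, rfl⟩ hne hpre
  have h1 : p.1 = q.1 := ecode_prefix_fst hpre
  have : p = q := hB q.1 ⟨hp, h1⟩ ⟨hq, rfl⟩
  exact hne (by rw [this])

/-- Existence of a maximal almost disjoint family of infinite antichains, via Zorn. -/
lemma exists_madAntichainFam : ∃ 𝒪, MadAntichainFam 𝒪 := by
  set S : Set (Set (Set (List ℕ))) :=
    {𝒪 | (∀ A ∈ 𝒪, A.Infinite ∧ IsAntichain (· <+: ·) A) ∧
      𝒪.Pairwise (fun A B => (A ∩ B).Finite)} with hS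
  have hzorn : ∀ c ⊆ S, IsChain (· ⊆ ·) c → ∃ ub ∈ S, ∀ s ∈ c, s ⊆ ub := by
    intro c hcS hchain
    refine ⟨⋃₀ c, ⟨?_, ?_⟩, fun s hs => Set.subset_sUnion_of_mem hs⟩
    · rintro A ⟨t, htc, hAt⟩
      exact (hcS htc).1 A hAt
    · rintro A ⟨t, htc, hAt⟩ A' ⟨t', htc', hAt'⟩ hne
      rcases hchain.total htc htc' with h | h
      · exact (hcS htc').2 (h hAt) hAt' hne
      · exact (hcS htc).2 hAt (h hAt') hne
  obtain ⟨m, hm⟩ := zorn_subset S hzorn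
  · refine ⟨m, hm.prop.1, hm.prop.2, ?_⟩
    intro B hBinf hBanti
    by_contra hno
    push_neg at hno
    have hno : ∀ A ∈ m, (B ∩ A).Finite := fun A hA => hno A hA
    have hBnotin : B ∉ m := by
      intro hBm
      exact hBinf (by simpa using hno B hBm)
    have hins : insert B m ∈ S := by
      constructor
      · rintro A (rfl | hA)
        · exact ⟨hBinf, hBanti⟩
        · exact hm.prop.1 A hA
      · intro A hA A' hA' hne
        rcases hA with rfl | hA <;> rcases hA' with rfl | hA'
        · exact absurd rfl hne
        · exact hno A' hA'
        · rw [Set.inter_comm]; exact hno A hA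
        · exact hm.prop.2 hA hA' hne
    have := hm.2 hins (Set.subset_insert B m)
    exact hBnotin (this (Set.mem_insert B m))

/-- From a mad family of infinite antichains we get a mad family of partial functions
of no greater cardinality. -/
lemma frakAs_le_mk {𝒪 : Set (Set (List ℕ))} (h𝒪 : MadAntichainFam 𝒪) :
    frakAs ≤ Cardinal.mk ↥𝒪 := by
  obtain ⟨hmem, hpair, hmax⟩ := h𝒪
  set 𝒜 : Set (Set (ℕ × ℕ)) :=
    {A | ∃ O ∈ 𝒪, A = ecode ⁻¹' O ∧ A.Infinite} with h𝒜
  have hA_mad : MadFnFam 𝒜 := by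
    refine ⟨?_, ?_, ?_⟩
    · rintro A ⟨O, hO, rfl, hinf⟩
      exact ⟨hinf, preimage_col_subsingleton (hmem O hO).2⟩
    · rintro A ⟨O, hO, rfl, _⟩ A' ⟨O', hO', rfl, _⟩ hne
      have hOO' : O ≠ O' := by rintro rfl; exact hne rfl
      have hfin : (O ∩ O').Finite := hpair hO hO' hOO'
      have : ecode ⁻¹' O ∩ ecode ⁻¹' O' = ecode ⁻¹' (O ∩ O') := rfl
      rw [this]
      exact hfin.preimage (ecode_injective.injOn)
    · intro B hBinf hBcol
      have himg : (ecode '' B).Infinite := hBinf.image (ecode_injective.injOn)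
      obtain ⟨O, hO, hOinf⟩ := hmax (ecode '' B) himg (image_antichain hBcol)
      have hsub : ecode '' B ∩ O ⊆ ecode '' (B ∩ ecode ⁻¹' O) := by
        rintro x ⟨⟨p, hp, rfl⟩, hxO⟩
        exact ⟨p, ⟨hp, hxO⟩, rfl⟩
      have hBA : (B ∩ ecode ⁻¹' O).Infinite :=
        Set.Infinite.of_image _ (hOinf.mono hsub)
      refine ⟨ecode ⁻¹' O, ⟨O, hO, rfl, ?_⟩, hBA⟩
      exact hBA.mono (Set.inter_subset_right)
  have hsub : 𝒜 ⊆ (fun O => ecode ⁻¹' O) '' 𝒪 := by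
    rintro A ⟨O, hO, rfl, _⟩
    exact ⟨O, hO, rfl⟩
  have hmk : Cardinal.mk ↥𝒜 ≤ Cardinal.mk ↥𝒪 :=
    (Cardinal.mk_le_mk_of_subset hsub).trans Cardinal.mk_image_le
  exact le_trans (csInf_le' ⟨𝒜, hA_mad, rfl⟩) hmk

/-- If `O` is an antichain then `Ō` meets every column of `ω × ω` at most once;
consequently `𝔞_s ≤ 𝔬̄`. -/
theorem obar_antichain_and_frakAs_le_frakObar :
    (∀ O : Set (List ℕ), IsAntichain (· <+: ·) O →
      ∀ b : ℕ → Set (List ℕ), (∀ n, IsBranch (b n) ∧ [n] ∈ b n) →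
      ∀ n, (obar O b ∩ Column n).Subsingleton) ∧
    frakAs ≤ frakObar := by
  constructor
  · intro O hO b hb n p hp q hq
    obtain ⟨⟨σ, ⟨hσO, hσb⟩, hσl⟩, hp2⟩ := hp
    obtain ⟨⟨τ, ⟨hτO, hτb⟩, hτl⟩, hq2⟩ := hq
    have h1 : p.1 = n := hp2
    have h2 : q.1 = n := hq2
    have hbeq : b q.1 = b p.1 := by rw [h1, h2]
    rw [hbeq] at hτb
    have hchain : IsChain (· <+: ·) (b p.1) := (hb p.1).1.1
    have hστ : σ = τ := by
      by_contra hne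
      rcases hchain hσb hτb hne with h | h
      · exact hO hσO hτO hne h
      · exact hO hτO hσO (Ne.symm hne) h
    have hsnd : p.2 = q.2 := by rw [← hσl, hστ, hτl]
    exact Prod.ext (by rw [h1, h2]) hsnd
  · obtain ⟨𝒪₀, h𝒪₀⟩ := exists_madAntichainFam
    have hne : {c | ∃ 𝒪 : Set (Set (List ℕ)), MadAntichainFam 𝒪 ∧
        Cardinal.mk ↥𝒪 = c}.Nonempty := ⟨_, 𝒪₀, h𝒪₀, rfl⟩
    obtain ⟨𝒪, h𝒪, hmk⟩ := csInf_mem hne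
    rw [frakObar, ← hmk]
    exact frakAs_le_mk h𝒪
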